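/- For integers m, n ≥ 2, dem(P_m □ P_n) = max{m, n}, where P_m □ P_n is the grid graph. -/

import Mathlib

open SimpleGraph

/-- A set `M` of vertices is a distance-edge-monitoring set of `G`. -/
def demSet {V : Type*} (G : SimpleGraph V) (M : Set V) : Prop :=
  ∀ e ∈ G.edgeSet, ∃ x ∈ M, ∃ y : V, G.dist x y ≠ (G.deleteEdges {e}).dist x y

/-- The distance-edge-monitoring number of `G`. -/
noncomputable def dem {V : Type*} (G : SimpleGraph V) [Fintype V] : ℕ :=
  sInf {k | ∃ M : Finset V, M.card = k ∧ demSet G ↑M}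

namespace DemGrid
variable {m n : ℕ}

lemma ndist (a b : ℕ) : Nat.dist a b = a - b + (b - a) := rfl

/-- L1 distance on the grid. -/
def dL1 (x y : Fin m × Fin n) : ℕ :=
  Nat.dist x.1.val y.1.val + Nat.dist x.2.val y.2.val

lemma dL1_self (x : Fin m × Fin n) : dL1 x x = 0 := by simp [dL1, Nat.dist_self]

lemma adj_dL1 {x y : Fin m × Fin n} (h : (pathGraph m □ pathGraph n).Adj x y) :
    dL1 x y = 1 := by
  rcases boxProd_adj.mp h with ⟨h1, h2⟩ | ⟨h1, h2⟩ <;>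
    rcases pathGraph_adj.mp h1 with hh | hh <;>
      simp_all [dL1, ndist, Prod.ext_iff] <;> omega

lemma dL1_le_length {x y : Fin m × Fin n} (p : (pathGraph m □ pathGraph n).Walk x y) :
    dL1 x y ≤ p.length := by
  induction p with
  | nil => simp [dL1_self]
  | @cons u w v h q ih =>
    have ht : dL1 u v ≤ dL1 u w + dL1 w v := by
      simp only [dL1]
      have := Nat.dist.triangle_inequality u.1.val w.1.val v.1.val
      have := Nat.dist.triangle_inequality u.2.val w.2.val v.2.val
      omega
    have := adj_dL1 h
    simp only [Walk.length_cons]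
    omega

lemma dL1_le_length' {H : SimpleGraph (Fin m × Fin n)} (hH : H ≤ pathGraph m □ pathGraph n)
    {x y : Fin m × Fin n} (p : H.Walk x y) : dL1 x y ≤ p.length := by
  have := dL1_le_length (p.mapLe hH)
  rwa [Walk.length_map] at this

/-- A walk on the path graph realizing `Nat.dist`. -/
lemma exists_pathWalk (N : ℕ) : ∀ k (i j : Fin N), Nat.dist i.val j.val = k →
    ∃ p : (pathGraph N).Walk i j, p.length = k := by
  intro k
  induction k with
  | zero =>
    intro i j h
    have : i = j := Fin.ext (by rw [ndist] at h; omega)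
    subst this; exact ⟨.nil, rfl⟩
  | succ k ih =>
    intro i j h
    by_cases hij : i.val < j.val
    · have hlt : i.val + 1 < N := lt_of_le_of_lt hij j.isLt
      let i' : Fin N := ⟨i.val + 1, hlt⟩
      have hadj : (pathGraph N).Adj i i' := pathGraph_adj.mpr (Or.inl rfl)
      obtain ⟨p, hp⟩ := ih i' j (by show Nat.dist (i.val+1) j.val = k; simp only [ndist] at h ⊢; omega)
      exact ⟨.cons hadj p, by simp [hp]⟩
    · have hji : j.val < i.val := by rw [ndist] at h; omega
      have hlt : i.val - 1 < N := by omega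
      let i' : Fin N := ⟨i.val - 1, hlt⟩
      have hadj : (pathGraph N).Adj i i' := pathGraph_adj.mpr (Or.inr (by simp [i']; omega))
      obtain ⟨p, hp⟩ := ih i' j (by show Nat.dist (i.val-1) j.val = k; simp only [ndist] at h ⊢; omega)
      exact ⟨.cons hadj p, by simp [hp]⟩

/-- Column-first then row walk: horizontal edges in row `x.1`, vertical edges in column `y.2`. -/
lemma exists_colRowWalk (x y : Fin m × Fin n) :
    ∃ p : (pathGraph m □ pathGraph n).Walk x y, p.length = dL1 x y ∧
      ∀ e ∈ p.edges, (∃ j j' : Fin n, e = s((x.1, j), (x.1, j'))) ∨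
        (∃ i i' : Fin m, e = s((i, y.2), (i', y.2))) := by
  obtain ⟨p1, hp1⟩ := exists_pathWalk n (Nat.dist x.2.val y.2.val) x.2 y.2 rfl
  obtain ⟨p2, hp2⟩ := exists_pathWalk m (Nat.dist x.1.val y.1.val) x.1 y.1 rfl
  refine ⟨((p1.boxProdRight (pathGraph m) x.1).append
      (p2.boxProdLeft (pathGraph n) y.2)).copy (by simp) (by simp), ?_, ?_⟩
  · have e1 : (p1.boxProdRight (pathGraph m) x.1).length = p1.length := Walk.length_map _ _
    have e2 : (p2.boxProdLeft (pathGraph n) y.2).length = p2.length := Walk.length_map _ _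
    simp only [Walk.length_copy, Walk.length_append, e1, e2, hp1, hp2, dL1]
    omega
  · intro e he
    simp only [Walk.edges_copy, Walk.edges_append, List.mem_append] at he
    rcases he with he | he
    · left
      rw [show (p1.boxProdRight (pathGraph m) x.1).edges = p1.edges.map _ from Walk.edges_map _ _, List.mem_map] at he
      obtain ⟨e0, _, rfl⟩ := he
      induction e0 using Sym2.ind with
      | _ u v => exact ⟨u, v, rfl⟩
    · right
      rw [show (p2.boxProdLeft (pathGraph n) y.2).edges = p2.edges.map _ from Walk.edges_map _ _, List.mem_map] at he
      obtain ⟨e0, _, rfl⟩ := he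
      induction e0 using Sym2.ind with
      | _ u v => exact ⟨u, v, rfl⟩

/-- Row-first then column walk: vertical edges in column `x.2`, horizontal edges in row `y.1`. -/
lemma exists_rowColWalk (x y : Fin m × Fin n) :
    ∃ p : (pathGraph m □ pathGraph n).Walk x y, p.length = dL1 x y ∧
      ∀ e ∈ p.edges, (∃ i i' : Fin m, e = s((i, x.2), (i', x.2))) ∨
        (∃ j j' : Fin n, e = s((y.1, j), (y.1, j'))) := by
  obtain ⟨p1, hp1⟩ := exists_pathWalk m (Nat.dist x.1.val y.1.val) x.1 y.1 rfl
  obtain ⟨p2, hp2⟩ := exists_pathWalk n (Nat.dist x.2.val y.2.val) x.2 y.2 rfl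
  refine ⟨((p1.boxProdLeft (pathGraph n) x.2).append
      (p2.boxProdRight (pathGraph m) y.1)).copy (by simp) (by simp), ?_, ?_⟩
  · have e1 : (p1.boxProdLeft (pathGraph n) x.2).length = p1.length := Walk.length_map _ _
    have e2 : (p2.boxProdRight (pathGraph m) y.1).length = p2.length := Walk.length_map _ _
    simp only [Walk.length_copy, Walk.length_append, e1, e2, hp1, hp2, dL1]
  · intro e he
    simp only [Walk.edges_copy, Walk.edges_append, List.mem_append] at he
    rcases he with he | he
    · left
      rw [show (p1.boxProdLeft (pathGraph n) x.2).edges = p1.edges.map _ from Walk.edges_map _ _, List.mem_map] at he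
      obtain ⟨e0, _, rfl⟩ := he
      induction e0 using Sym2.ind with
      | _ u v => exact ⟨u, v, rfl⟩
    · right
      rw [show (p2.boxProdRight (pathGraph m) y.1).edges = p2.edges.map _ from Walk.edges_map _ _, List.mem_map] at he
      obtain ⟨e0, _, rfl⟩ := he
      induction e0 using Sym2.ind with
      | _ u v => exact ⟨u, v, rfl⟩

lemma dist_eq (x y : Fin m × Fin n) :
    (pathGraph m □ pathGraph n).dist x y = dL1 x y := by
  obtain ⟨p, hp, -⟩ := exists_colRowWalk x y
  refine le_antisymm (hp ▸ SimpleGraph.dist_le p) ?_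
  rcases Nat.eq_zero_or_pos (dL1 x y) with h0 | h0
  · omega
  · obtain ⟨q, hq⟩ := Reachable.exists_walk_length_eq_dist ⟨p⟩
    rw [← hq]
    exact dL1_le_length q

lemma dist_del_eq {s : Set (Sym2 (Fin m × Fin n))} {x y : Fin m × Fin n}
    (p : (pathGraph m □ pathGraph n).Walk x y) (hlen : p.length = dL1 x y)
    (hp : ∀ e ∈ p.edges, e ∉ s) :
    ((pathGraph m □ pathGraph n).deleteEdges s).dist x y = dL1 x y := by
  have hle : ((pathGraph m □ pathGraph n).deleteEdges s).dist x y ≤ dL1 x y := by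
    have h1 := SimpleGraph.dist_le (p.toDeleteEdges s hp)
    have h2 : (p.toDeleteEdges s hp).length = p.length := Walk.length_transfer _ _
    omega
  rcases Nat.eq_zero_or_pos (dL1 x y) with h0 | h0
  · omega
  · obtain ⟨q, hq⟩ := Reachable.exists_walk_length_eq_dist ⟨p.toDeleteEdges s hp⟩
    have := dL1_le_length' (deleteEdges_le s) q
    omega

lemma forced_col {H : SimpleGraph (Fin m × Fin n)} (hH : H ≤ pathGraph m □ pathGraph n)
    (a : Fin m) (c d : Fin n) (hne : c ≠ d) (p : H.Walk (a, c) (a, d))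
    (hlen : p.length = Nat.dist c.val d.val) :
    ∃ c' : Fin n, s(((a, c) : Fin m × Fin n), (a, c')) ∈ p.edges ∧
      ((c.val < d.val ∧ c'.val = c.val + 1) ∨ (d.val < c.val ∧ c'.val + 1 = c.val)) := by
  have hcd : c.val ≠ d.val := fun h => hne (Fin.ext h)
  cases p with
  | nil => exact absurd rfl hne
  | @cons _ w _ h q =>
    have hw := dL1_le_length' hH q
    have hq : q.length + 1 = Nat.dist c.val d.val := by simpa using hlen
    rcases boxProd_adj.mp (hH h) with ⟨h1, h2⟩ | ⟨h1, h2⟩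
    · exfalso
      have h2' : c.val = w.2.val := congrArg Fin.val (show c = w.2 from h2)
      have h1' : (pathGraph m).Adj a w.1 := h1
      have hd1 : Nat.dist a.val w.1.val = 1 := by
        rcases pathGraph_adj.mp h1' with hh | hh <;> (rw [ndist]; omega)
      simp only [dL1, ndist] at hw
      rw [ndist] at hq hd1
      omega
    · have h2' : a = w.1 := h2
      have hww : w = (a, w.2) := by rw [h2']
      refine ⟨w.2, ?_, ?_⟩
      · rw [Walk.edges_cons]
        exact List.mem_cons.mpr (Or.inl (by rw [← hww]))
      · have h2v : a.val = w.1.val := congrArg Fin.val h2'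
        have h1' : (pathGraph n).Adj c w.2 := h1
        simp only [dL1, ndist] at hw
        rw [ndist] at hq
        rcases pathGraph_adj.mp h1' with hh | hh <;> omega

lemma forced_row {H : SimpleGraph (Fin m × Fin n)} (hH : H ≤ pathGraph m □ pathGraph n)
    (b : Fin n) (c d : Fin m) (hne : c ≠ d) (p : H.Walk (c, b) (d, b))
    (hlen : p.length = Nat.dist c.val d.val) :
    ∃ c' : Fin m, s(((c, b) : Fin m × Fin n), (c', b)) ∈ p.edges ∧
      ((c.val < d.val ∧ c'.val = c.val + 1) ∨ (d.val < c.val ∧ c'.val + 1 = c.val)) := by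
  have hcd : c.val ≠ d.val := fun h => hne (Fin.ext h)
  cases p with
  | nil => exact absurd rfl hne
  | @cons _ w _ h q =>
    have hw := dL1_le_length' hH q
    have hq : q.length + 1 = Nat.dist c.val d.val := by simpa using hlen
    rcases boxProd_adj.mp (hH h) with ⟨h1, h2⟩ | ⟨h1, h2⟩
    · have h2' : b = w.2 := h2
      have hww : w = (w.1, b) := by rw [h2']
      refine ⟨w.1, ?_, ?_⟩
      · rw [Walk.edges_cons]
        exact List.mem_cons.mpr (Or.inl (by rw [← hww]))
      · have h2v : b.val = w.2.val := congrArg Fin.val h2'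
        have h1' : (pathGraph m).Adj c w.1 := h1
        simp only [dL1, ndist] at hw
        rw [ndist] at hq
        rcases pathGraph_adj.mp h1' with hh | hh <;> omega
    · exfalso
      have h2' : c.val = w.1.val := congrArg Fin.val (show c = w.1 from h2)
      have h1' : (pathGraph n).Adj b w.2 := h1
      have hd1 : Nat.dist b.val w.2.val = 1 := by
        rcases pathGraph_adj.mp h1' with hh | hh <;> (rw [ndist]; omega)
      simp only [dL1, ndist] at hw
      rw [ndist] at hq hd1
      omega

lemma monitor_horiz (a : Fin m) {k k' : Fin n} (hk : k.val + 1 = k'.val) (c : Fin n) :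
    ∃ y, (pathGraph m □ pathGraph n).dist (a, c) y ≠
      ((pathGraph m □ pathGraph n).deleteEdges {s(((a, k) : Fin m × Fin n), (a, k'))}).dist (a, c) y := by
  by_cases hc : c.val ≤ k.val
  · refine ⟨(a, k'), fun hEq => ?_⟩
    rw [dist_eq] at hEq
    have hd0 : dL1 ((a, c) : Fin m × Fin n) (a, k') ≠ 0 := by
      simp only [dL1, ndist]; omega
    obtain ⟨q, hq⟩ := exists_walk_of_dist_ne_zero (by rw [← hEq]; exact hd0)
    have hlen : q.reverse.length = Nat.dist k'.val c.val := by
      rw [Walk.length_reverse, hq, ← hEq]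
      simp only [dL1, ndist]; omega
    have hne : k' ≠ c := by intro h; have := congrArg Fin.val h; omega
    obtain ⟨c', hmem, hcase⟩ := forced_col (deleteEdges_le _) a k' c hne q.reverse hlen
    have hc' : c' = k := by
      apply Fin.ext
      rcases hcase with ⟨h1, h2⟩ | ⟨h1, h2⟩ <;> omega
    rw [hc'] at hmem
    have hedge := Walk.edges_subset_edgeSet q.reverse hmem
    rw [edgeSet_deleteEdges] at hedge
    exact hedge.2 (Set.mem_singleton_iff.mpr Sym2.eq_swap)
  · refine ⟨(a, k), fun hEq => ?_⟩
    rw [dist_eq] at hEq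
    have hd0 : dL1 ((a, c) : Fin m × Fin n) (a, k) ≠ 0 := by
      simp only [dL1, ndist]; omega
    obtain ⟨q, hq⟩ := exists_walk_of_dist_ne_zero (by rw [← hEq]; exact hd0)
    have hlen : q.reverse.length = Nat.dist k.val c.val := by
      rw [Walk.length_reverse, hq, ← hEq]
      simp only [dL1, ndist]; omega
    have hne : k ≠ c := by intro h; have := congrArg Fin.val h; omega
    obtain ⟨c', hmem, hcase⟩ := forced_col (deleteEdges_le _) a k c hne q.reverse hlen
    have hc' : c' = k' := by
      apply Fin.ext
      rcases hcase with ⟨h1, h2⟩ | ⟨h1, h2⟩ <;> omega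
    rw [hc'] at hmem
    have hedge := Walk.edges_subset_edgeSet q.reverse hmem
    rw [edgeSet_deleteEdges] at hedge
    exact hedge.2 rfl

lemma monitor_vert (b : Fin n) {k k' : Fin m} (hk : k.val + 1 = k'.val) (c : Fin m) :
    ∃ y, (pathGraph m □ pathGraph n).dist (c, b) y ≠
      ((pathGraph m □ pathGraph n).deleteEdges {s(((k, b) : Fin m × Fin n), (k', b))}).dist (c, b) y := by
  by_cases hc : c.val ≤ k.val
  · refine ⟨(k', b), fun hEq => ?_⟩
    rw [dist_eq] at hEq
    have hd0 : dL1 ((c, b) : Fin m × Fin n) (k', b) ≠ 0 := by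
      simp only [dL1, ndist]; omega
    obtain ⟨q, hq⟩ := exists_walk_of_dist_ne_zero (by rw [← hEq]; exact hd0)
    have hlen : q.reverse.length = Nat.dist k'.val c.val := by
      rw [Walk.length_reverse, hq, ← hEq]
      simp only [dL1, ndist]; omega
    have hne : k' ≠ c := by intro h; have := congrArg Fin.val h; omega
    obtain ⟨c', hmem, hcase⟩ := forced_row (deleteEdges_le _) b k' c hne q.reverse hlen
    have hc' : c' = k := by
      apply Fin.ext
      rcases hcase with ⟨h1, h2⟩ | ⟨h1, h2⟩ <;> omega
    rw [hc'] at hmem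
    have hedge := Walk.edges_subset_edgeSet q.reverse hmem
    rw [edgeSet_deleteEdges] at hedge
    exact hedge.2 (Set.mem_singleton_iff.mpr Sym2.eq_swap)
  · refine ⟨(k, b), fun hEq => ?_⟩
    rw [dist_eq] at hEq
    have hd0 : dL1 ((c, b) : Fin m × Fin n) (k, b) ≠ 0 := by
      simp only [dL1, ndist]; omega
    obtain ⟨q, hq⟩ := exists_walk_of_dist_ne_zero (by rw [← hEq]; exact hd0)
    have hlen : q.reverse.length = Nat.dist k.val c.val := by
      rw [Walk.length_reverse, hq, ← hEq]
      simp only [dL1, ndist]; omega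
    have hne : k ≠ c := by intro h; have := congrArg Fin.val h; omega
    obtain ⟨c', hmem, hcase⟩ := forced_row (deleteEdges_le _) b k c hne q.reverse hlen
    have hc' : c' = k' := by
      apply Fin.ext
      rcases hcase with ⟨h1, h2⟩ | ⟨h1, h2⟩ <;> omega
    rw [hc'] at hmem
    have hedge := Walk.edges_subset_edgeSet q.reverse hmem
    rw [edgeSet_deleteEdges] at hedge
    exact hedge.2 rfl

end DemGrid

open DemGrid

theorem stmt_16 (m n : ℕ) (hm : 2 ≤ m) (hn : 2 ≤ n) :
    dem (pathGraph m □ pathGraph n) = max m n := by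
  classical
  have hm0 : 0 < m := by omega
  have hn0 : 0 < n := by omega
  -- the diagonal-ish monitoring set
  let f : Fin (max m n) → Fin m × Fin n :=
    fun i => (⟨i.val % m, Nat.mod_lt _ hm0⟩, ⟨i.val % n, Nat.mod_lt _ hn0⟩)
  have hfinj : Function.Injective f := by
    intro i j hij
    have h1 : i.val % m = j.val % m := congrArg (fun p => (Prod.fst p).val) hij
    have h2 : i.val % n = j.val % n := congrArg (fun p => (Prod.snd p).val) hij
    apply Fin.ext
    rcases le_total m n with h | h
    · have hi : i.val < n := lt_of_lt_of_le i.isLt (by omega)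
      have hj : j.val < n := lt_of_lt_of_le j.isLt (by omega)
      rwa [Nat.mod_eq_of_lt hi, Nat.mod_eq_of_lt hj] at h2
    · have hi : i.val < m := lt_of_lt_of_le i.isLt (by omega)
      have hj : j.val < m := lt_of_lt_of_le j.isLt (by omega)
      rwa [Nat.mod_eq_of_lt hi, Nat.mod_eq_of_lt hj] at h1
  let M : Finset (Fin m × Fin n) := Finset.image f Finset.univ
  have hcard : M.card = max m n := by
    rw [Finset.card_image_of_injective _ hfinj, Finset.card_univ, Fintype.card_fin]
  have hrowM : ∀ a : Fin m, ∃ c : Fin n, (a, c) ∈ M := by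
    intro a
    refine ⟨⟨a.val % n, Nat.mod_lt _ hn0⟩,
      Finset.mem_image.mpr ⟨⟨a.val, lt_of_lt_of_le a.isLt (le_max_left m n)⟩,
        Finset.mem_univ _, ?_⟩⟩
    simp [f, Prod.ext_iff, Fin.ext_iff, Nat.mod_eq_of_lt a.isLt]
  have hcolM : ∀ b : Fin n, ∃ c : Fin m, (c, b) ∈ M := by
    intro b
    refine ⟨⟨b.val % m, Nat.mod_lt _ hm0⟩,
      Finset.mem_image.mpr ⟨⟨b.val, lt_of_lt_of_le b.isLt (le_max_right m n)⟩,
        Finset.mem_univ _, ?_⟩⟩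
    simp [f, Prod.ext_iff, Fin.ext_iff, Nat.mod_eq_of_lt b.isLt]
  have hdem : demSet (pathGraph m □ pathGraph n) ↑M := by
    intro e he
    induction e using Sym2.ind with
    | _ u v =>
      obtain ⟨u1, u2⟩ := u
      obtain ⟨v1, v2⟩ := v
      rw [mem_edgeSet] at he
      rcases boxProd_adj.mp he with ⟨h1, h2⟩ | ⟨h1, h2⟩
      · -- vertical edge, u2 = v2
        have h2' : u2 = v2 := h2
        subst h2'
        have h1' : (pathGraph m).Adj u1 v1 := h1
        obtain ⟨c, hc⟩ := hcolM u2
        rcases pathGraph_adj.mp h1' with hh | hh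
        · obtain ⟨y, hy⟩ := monitor_vert u2 hh c
          exact ⟨(c, u2), Finset.mem_coe.mpr hc, y, hy⟩
        · obtain ⟨y, hy⟩ := monitor_vert u2 hh c
          rw [show s(((u1, u2) : Fin m × Fin n), (v1, u2)) = s((v1, u2), (u1, u2)) from
            Sym2.eq_swap]
          exact ⟨(c, u2), Finset.mem_coe.mpr hc, y, hy⟩
      · -- horizontal edge, u1 = v1
        have h2' : u1 = v1 := h2
        subst h2'
        have h1' : (pathGraph n).Adj u2 v2 := h1
        obtain ⟨c, hc⟩ := hrowM u1
        rcases pathGraph_adj.mp h1' with hh | hh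
        · obtain ⟨y, hy⟩ := monitor_horiz u1 hh c
          exact ⟨(u1, c), Finset.mem_coe.mpr hc, y, hy⟩
        · obtain ⟨y, hy⟩ := monitor_horiz u1 hh c
          rw [show s(((u1, u2) : Fin m × Fin n), (u1, v2)) = s((u1, v2), (u1, u2)) from
            Sym2.eq_swap]
          exact ⟨(u1, c), Finset.mem_coe.mpr hc, y, hy⟩
  -- lower bound
  have hlow : ∀ K : ℕ, (∃ M' : Finset (Fin m × Fin n), M'.card = K ∧
      demSet (pathGraph m □ pathGraph n) ↑M') → max m n ≤ K := by
    rintro K ⟨M', rfl, hM'⟩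
    have hrow' : ∀ a : Fin m, ∃ x ∈ M', x.1 = a := by
      intro a
      by_contra hcon
      push_neg at hcon
      set k0 : Fin n := ⟨0, by omega⟩ with hk0
      set k1 : Fin n := ⟨1, by omega⟩ with hk1
      have he : s(((a, k0) : Fin m × Fin n), (a, k1)) ∈
          (pathGraph m □ pathGraph n).edgeSet :=
        (mem_edgeSet _).mpr (boxProd_adj.mpr (Or.inr ⟨pathGraph_adj.mpr (Or.inl rfl), rfl⟩))
      obtain ⟨x, hxM, y, hxy⟩ := hM' _ he
      apply hxy
      rw [dist_eq]
      obtain ⟨p, hp, hpe⟩ := exists_colRowWalk x y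
      refine (dist_del_eq p hp ?_).symm
      intro e' he' hmem
      rcases hpe e' he' with ⟨j, j', rfl⟩ | ⟨i, i', rfl⟩
      · simp only [Set.mem_singleton_iff, Sym2.eq_iff, Prod.mk.injEq] at hmem
        rcases hmem with ⟨⟨h, -⟩, -⟩ | ⟨⟨h, -⟩, -⟩ <;> exact hcon x hxM h
      · simp only [Set.mem_singleton_iff, Sym2.eq_iff, Prod.mk.injEq, Fin.ext_iff, hk0, hk1]
          at hmem
        omega
    have hcol' : ∀ b : Fin n, ∃ x ∈ M', x.2 = b := by
      intro b
      by_contra hcon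
      push_neg at hcon
      set k0 : Fin m := ⟨0, by omega⟩ with hk0
      set k1 : Fin m := ⟨1, by omega⟩ with hk1
      have he : s(((k0, b) : Fin m × Fin n), (k1, b)) ∈
          (pathGraph m □ pathGraph n).edgeSet :=
        (mem_edgeSet _).mpr (boxProd_adj.mpr (Or.inl ⟨pathGraph_adj.mpr (Or.inl rfl), rfl⟩))
      obtain ⟨x, hxM, y, hxy⟩ := hM' _ he
      apply hxy
      rw [dist_eq]
      obtain ⟨p, hp, hpe⟩ := exists_rowColWalk x y
      refine (dist_del_eq p hp ?_).symm
      intro e' he' hmem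
      rcases hpe e' he' with ⟨i, i', rfl⟩ | ⟨j, j', rfl⟩
      · simp only [Set.mem_singleton_iff, Sym2.eq_iff, Prod.mk.injEq] at hmem
        rcases hmem with ⟨⟨-, h⟩, -⟩ | ⟨⟨-, h⟩, -⟩ <;> exact hcon x hxM h
      · simp only [Set.mem_singleton_iff, Sym2.eq_iff, Prod.mk.injEq, Fin.ext_iff, hk0, hk1]
          at hmem
        omega
    have hmle : m ≤ M'.card := by
      choose g hg1 hg2 using hrow'
      have := Finset.card_le_card_of_injOn (s := Finset.univ) g (fun a _ => hg1 a)
        (fun a _ b _ hab => by rw [← hg2 a, ← hg2 b, hab])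
      simpa using this
    have hnle : n ≤ M'.card := by
      choose g hg1 hg2 using hcol'
      have := Finset.card_le_card_of_injOn (s := Finset.univ) g (fun a _ => hg1 a)
        (fun a _ b _ hab => by rw [← hg2 a, ← hg2 b, hab])
      simpa using this
    exact max_le hmle hnle
  exact le_antisymm (Nat.sInf_le ⟨M, hcard, hdem⟩)
    (le_csInf ⟨max m n, M, hcard, hdem⟩ hlow)
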